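/- Explicit rectification of s_{(n,α)} (Lemma 1.1, nonzero case): let α = (α_1 ≥ ⋯ ≥ α_l > 0) be a partition and k ≥ 0 an integer. Set m := #{i : α_i > k}, define β = (β_1, …, β_l) by β_i = α_i − 1 if α_i > k and β_i = α_i otherwise (β is a partition), and let μ be the partition obtained by inserting one additional part equal to k into β (sorting the multiset of parts of β together with k into weakly decreasing order). Then in any number of variables, s_{(k − m, α_1, …, α_l)} = (−1)^m · s_μ, and |μ| = |α| + k − m. Equivalently, μ is obtained from α by removing one cell from each row with α_i > k (a vertical strip of size m) and adding one cell to each of the first k columns (a horizontal strip of size k). -/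

import Mathlib

open MvPolynomial

/-- The complete homogeneous symmetric polynomial `h_k` indexed by an integer,
with the convention `h_0 = 1` and `h_k = 0` for `k < 0`. -/
noncomputable def hInt (σ : Type*) [Fintype σ] [DecidableEq σ] (R : Type*) [CommRing R]
    (k : ℤ) : MvPolynomial σ R :=
  if 0 ≤ k then hsymm σ R k.toNat else 0

/-- The Jacobi–Trudi polynomial `s_α = det (h_{α_i + j - i})` of an arbitrary integer
sequence `α`, in the variables indexed by `σ`. -/
noncomputable def jacobiTrudi (σ : Type*) [Fintype σ] [DecidableEq σ] (R : Type*) [CommRing R]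
    {l : ℕ} (α : Fin l → ℤ) : MvPolynomial σ R :=
  Matrix.det (Matrix.of fun i j : Fin l => hInt σ R (α i + (j : ℕ) - (i : ℕ)))

open MvPolynomial

lemma antitone_eq_of_multiset_map_eq {n : ℕ} {f g : Fin n → ℕ}
    (hf : Antitone f) (hg : Antitone g)
    (h : Multiset.map f Finset.univ.val = Multiset.map g Finset.univ.val) : f = g := by
  have hf' : (List.ofFn f).Pairwise (· ≥ ·) := List.pairwise_ofFn.2 fun i j hij => hf hij.le
  have hg' : (List.ofFn g).Pairwise (· ≥ ·) := List.pairwise_ofFn.2 fun i j hij => hg hij.le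
  rw [Fin.univ_val_map, Fin.univ_val_map] at h
  exact List.ofFn_injective (List.Perm.eq_of_pairwise' hf' hg' (Multiset.coe_eq_coe.mp h))

def insFun {l : ℕ} (β : Fin l → ℕ) (c k : ℕ) (hcl : c ≤ l) : Fin (l + 1) → ℕ :=
  fun i => if h : (i : ℕ) < c then β ⟨i, by omega⟩
  else if h2 : (i : ℕ) = c then k
  else β ⟨(i : ℕ) - 1, by have := i.isLt; omega⟩

lemma insFun_ofFn {l : ℕ} (β : Fin l → ℕ) (c k : ℕ) (hcl : c ≤ l) :
    List.ofFn (insFun β c k hcl) =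
      (List.ofFn β).take c ++ k :: (List.ofFn β).drop c := by
  apply List.ext_getElem
  · simp; omega
  · intro i h1 h2
    simp only [List.getElem_ofFn, insFun]
    rcases lt_trichotomy i c with hic | hic | hic
    · rw [List.getElem_append_left (by simp; omega)]
      simp [hic]
    · rw [List.getElem_append_right (by simp; omega)]
      simp [hic, Nat.min_eq_left hcl]
    · rw [List.getElem_append_right (by simp; omega)]
      simp only [List.length_take, List.length_ofFn, Nat.min_eq_left hcl]
      obtain ⟨j, hj⟩ : ∃ j, i - c = j + 1 := ⟨i - c - 1, by omega⟩
      simp only [hj, List.getElem_cons_succ, List.getElem_drop, List.getElem_ofFn]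
      rw [dif_neg (by omega), dif_neg (by omega)]
      congr 1
      apply Fin.ext
      simp
      omega

lemma insFun_antitone {l : ℕ} {β : Fin l → ℕ} {c k : ℕ} (hcl : c ≤ l)
    (hβm : Antitone β) (h1 : ∀ i : Fin l, (i : ℕ) < c → k ≤ β i)
    (h2 : ∀ i : Fin l, c ≤ (i : ℕ) → β i ≤ k) :
    Antitone (insFun β c k hcl) := by
  intro i j hij
  have hij' : (i : ℕ) ≤ (j : ℕ) := hij
  have hm : ∀ (a b : ℕ) (hA : a < l) (hB : b < l), a ≤ b → β ⟨b, hB⟩ ≤ β ⟨a, hA⟩ :=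
    fun a b hA hB hab => hβm (Fin.mk_le_mk.mpr hab)
  have hk1 : ∀ (a : ℕ) (hA : a < l), a < c → k ≤ β ⟨a, hA⟩ := fun a hA h => h1 ⟨a, hA⟩ h
  have hk2 : ∀ (a : ℕ) (hA : a < l), c ≤ a → β ⟨a, hA⟩ ≤ k := fun a hA h => h2 ⟨a, hA⟩ h
  simp only [insFun]
  split_ifs <;>
    first
      | rfl
      | omega
      | (exact hm _ _ _ _ (by omega))
      | (exact hk1 _ _ (by omega))
      | (exact hk2 _ _ (by omega))
theorem jacobiTrudi_prepend_rectification (R : Type*) [CommRing R] (m l : ℕ)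
    (α : Fin l → ℕ) (hα : Antitone α) (hpos : ∀ i, 0 < α i) (k : ℕ)
    (c : ℕ) (hc : c = (Finset.univ.filter fun i : Fin l => k < α i).card)
    (β : Fin l → ℕ) (hβ : ∀ i, β i = if k < α i then α i - 1 else α i)
    (μ : Fin (l + 1) → ℕ) (hμdec : Antitone μ)
    (hμ : Multiset.map μ Finset.univ.val = k ::ₘ Multiset.map β Finset.univ.val) :
    Antitone β ∧
    jacobiTrudi (Fin m) R (Fin.cons ((k : ℤ) - (c : ℤ)) (fun i => (α i : ℤ))) =
      ((-1 : ℤ) ^ c) • jacobiTrudi (Fin m) R (fun i => (μ i : ℤ)) ∧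
    (∑ i : Fin (l + 1), (μ i : ℤ)) = (∑ i : Fin l, (α i : ℤ)) + (k : ℤ) - (c : ℤ) := by
  have hcl : c ≤ l := by
    rw [hc]
    simpa using Finset.card_filter_le Finset.univ (fun i : Fin l => k < α i)
  -- the filter is an initial segment
  have hcut : ∀ i : Fin l, k < α i ↔ (i : ℕ) < c := by
    intro i
    constructor
    · intro h
      have hsub : Finset.Iic i ⊆ Finset.univ.filter fun j : Fin l => k < α j := by
        intro j hj
        simp only [Finset.mem_Iic] at hj
        simp only [Finset.mem_filter, Finset.mem_univ, true_and]
        exact lt_of_lt_of_le h (hα hj)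
      have h2 := Finset.card_le_card hsub
      rw [Fin.card_Iic, ← hc] at h2
      omega
    · intro h
      by_contra hcon
      have hsub : (Finset.univ.filter fun j : Fin l => k < α j) ⊆ Finset.Iio i := by
        intro j hj
        simp only [Finset.mem_filter, Finset.mem_univ, true_and] at hj
        simp only [Finset.mem_Iio]
        by_contra hji
        exact hcon (lt_of_lt_of_le hj (hα (le_of_not_gt hji)))
      have h2 := Finset.card_le_card hsub
      rw [Fin.card_Iio, ← hc] at h2
      omega
  have hβanti : Antitone β := by
    intro i j hij
    have h1 := hα hij
    have := hpos i
    have := hpos j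
    rw [hβ i, hβ j]
    split_ifs <;> omega
  have h1k : ∀ i : Fin l, (i : ℕ) < c → k ≤ β i := by
    intro i hi
    have h := (hcut i).2 hi
    rw [hβ i, if_pos h]; omega
  have h2k : ∀ i : Fin l, c ≤ (i : ℕ) → β i ≤ k := by
    intro i hi
    have h : ¬ k < α i := fun hh => by have := (hcut i).1 hh; omega
    rw [hβ i, if_neg h]; omega
  have hmul : Multiset.map (insFun β c k hcl) Finset.univ.val
      = k ::ₘ Multiset.map β Finset.univ.val := by
    rw [Fin.univ_val_map, Fin.univ_val_map, insFun_ofFn, Multiset.cons_coe,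
      Multiset.coe_eq_coe]
    refine List.perm_middle.trans ?_
    rw [List.take_append_drop]
  have hμeq : μ = insFun β c k hcl :=
    antitone_eq_of_multiset_map_eq hμdec (insFun_antitone hcl hβanti h1k h2k)
      (hμ.trans hmul.symm)
  -- pointwise values of μ
  have hμc : μ ⟨c, by omega⟩ = k := by
    rw [hμeq]
    simp [insFun]
  have hμa : ∀ t : Fin l, (t : ℕ) < c → (μ (Fin.castSucc t) : ℤ) = (α t : ℤ) - 1 := by
    intro t ht
    rw [hμeq]
    simp only [insFun, Fin.coe_castSucc, dif_pos ht]
    have : (⟨(t : ℕ), by omega⟩ : Fin l) = t := rfl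
    rw [this, hβ t, if_pos ((hcut t).2 ht), Nat.cast_sub (hpos t), Nat.cast_one]
  have hμb : ∀ t : Fin l, c ≤ (t : ℕ) → μ (Fin.succ t) = α t := by
    intro t ht
    rw [hμeq]
    simp only [insFun, Fin.val_succ]
    rw [dif_neg (by omega), dif_neg (by omega)]
    have : (⟨(t : ℕ) + 1 - 1, by omega⟩ : Fin l) = t := rfl
    rw [this, hβ t, if_neg (fun hh => by have := (hcut t).1 hh; omega)]
  -- the permutation
  set p : Equiv.Perm (Fin (l + 1)) := Fin.cycleRange ⟨c, by omega⟩ with hp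
  have key : ∀ i : Fin (l + 1),
      (Fin.cons ((k : ℤ) - (c : ℤ)) (fun i : Fin l => (α i : ℤ)) : Fin (l + 1) → ℤ) i + ((p⁻¹ i : Fin (l + 1)) : ℕ)
        = (μ (p⁻¹ i) : ℤ) + ((i : ℕ) : ℤ) := by
    intro i
    induction i using Fin.cases with
    | zero =>
      have hσ0 : p⁻¹ 0 = ⟨c, by omega⟩ := by
        rw [Equiv.Perm.inv_eq_iff_eq, hp, Fin.cycleRange_self]
      rw [hσ0, Fin.cons_zero, hμc]
      simp
    | succ t =>
      by_cases ht : (t : ℕ) < c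
      · have hσ : p⁻¹ t.succ = t.castSucc := by
          rw [Equiv.Perm.inv_eq_iff_eq, hp,
            Fin.cycleRange_of_lt (show t.castSucc < ⟨c, by omega⟩ from by
              simp [Fin.lt_def, ht]),
            Fin.coeSucc_eq_succ]
        rw [hσ, Fin.cons_succ, hμa t ht]
        simp [Fin.val_succ]
        try ring
      · have hσ : p⁻¹ t.succ = t.succ := by
          rw [Equiv.Perm.inv_eq_iff_eq, hp,
            Fin.cycleRange_of_gt (show (⟨c, by omega⟩ : Fin (l + 1)) < t.succ from by
              simp [Fin.lt_def]; omega)]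
        rw [hσ, Fin.cons_succ, hμb t (le_of_not_gt ht)]
  have hdet : jacobiTrudi (Fin m) R (Fin.cons ((k : ℤ) - (c : ℤ)) (fun i => (α i : ℤ)))
      = ((-1 : ℤ) ^ c) • jacobiTrudi (Fin m) R (fun i : Fin (l + 1) => (μ i : ℤ)) := by
    unfold jacobiTrudi
    have hB : (Matrix.of fun i j : Fin (l + 1) =>
        hInt (Fin m) R ((Fin.cons ((k : ℤ) - (c : ℤ)) (fun i : Fin l => (α i : ℤ)) : Fin (l + 1) → ℤ) i + (j : ℕ) - (i : ℕ)))
        = (Matrix.of fun i j : Fin (l + 1) =>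
            hInt (Fin m) R ((μ i : ℤ) + (j : ℕ) - (i : ℕ))).submatrix (⇑(p⁻¹)) id := by
      ext i j
      simp only [Matrix.submatrix_apply, Matrix.of_apply, id]
      have harg : (Fin.cons ((k : ℤ) - (c : ℤ)) (fun i : Fin l => (α i : ℤ)) : Fin (l + 1) → ℤ) i
          + ((j : ℕ) : ℤ) - ((i : ℕ) : ℤ)
          = (μ (p⁻¹ i) : ℤ) + ((j : ℕ) : ℤ) - (((p⁻¹ i : Fin (l + 1)) : ℕ) : ℤ) := by
        have := key i
        linarith
      rw [harg]
    rw [hB, Matrix.det_permute, zsmul_eq_mul]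
    congr 1
    have hsign : Equiv.Perm.sign p⁻¹ = ((-1 : ℤˣ)) ^ c := by
      rw [Equiv.Perm.sign_inv, hp, Fin.sign_cycleRange]
    rw [hsign]
    push_cast
    ring
  refine ⟨hβanti, hdet, ?_⟩
  have hsum := congrArg Multiset.sum hμ
  rw [Multiset.sum_cons] at hsum
  have h1 : ∑ i, μ i = k + ∑ i, β i := hsum
  have h2 : (∑ i : Fin l, (β i : ℤ)) = (∑ i : Fin l, (α i : ℤ)) - c := by
    have hterm : ∀ i : Fin l, (β i : ℤ) = (α i : ℤ) - (if k < α i then 1 else 0) := by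
      intro i
      rw [hβ i]
      split_ifs with h
      · rw [Nat.cast_sub (hpos i), Nat.cast_one]
      · simp
    rw [Finset.sum_congr rfl fun i _ => hterm i, Finset.sum_sub_distrib, Finset.sum_boole, ← hc]
  have h1z : (∑ i : Fin (l + 1), (μ i : ℤ)) = (k : ℤ) + ∑ i : Fin l, (β i : ℤ) := by
    exact_mod_cast congrArg (fun n : ℕ => (n : ℤ)) h1
  rw [h1z, h2]
  ring
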